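/- For any pure quantum state |ψ⟩ on m ≥ n qubits and any bit string (b₁,...,bₙ) ∈ {0,1}ⁿ, letting Λ_{b} := ∑_{e ≠ b} |e⟩⟨e| be the projector onto computational basis states of the first n qubits differing from b, it holds that ⟨ψ|(|+⟩⟨+|^{⊗n} ⊗ I)|ψ⟩ ≤ 2⟨ψ|(Λ_{b} ⊗ I)|ψ⟩ + 2^{-n+1}. -/

import Mathlib

/-- For any pure quantum state |ψ⟩ on the first `n` qubits together with an
arbitrary remaining register `R` (so `m ≥ n` qubits in total) and any bit string
`b ∈ {0,1}ⁿ`, the expectation of `|+⟩⟨+|^{⊗n} ⊗ I` is at most twice the expectation of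
`Λ_b ⊗ I` plus `2^{-n+1}`.  Here the `|+⟩⟨+|^{⊗n} ⊗ I` expectation is
`2^{-n} ∑_r ‖∑_e ψ(e,r)‖²` and the `Λ_b ⊗ I` expectation is `∑_r ∑_{e ≠ b} ‖ψ(e,r)‖²`. -/
theorem stmt_0 {n : ℕ} {R : Type*} [Fintype R]
    (ψ : ((Fin n → Bool) × R) → ℂ)
    (hψ : ∑ x : (Fin n → Bool) × R, ‖ψ x‖ ^ 2 = 1)
    (b : Fin n → Bool) :
    (1 / 2 ^ n : ℝ) * ∑ r : R, ‖∑ e : Fin n → Bool, ψ (e, r)‖ ^ 2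
      ≤ 2 * ∑ r : R, ∑ e ∈ Finset.univ.filter (fun e : Fin n → Bool => e ≠ b), ‖ψ (e, r)‖ ^ 2
        + 2 / 2 ^ n := by
  classical
  set S := Finset.univ.filter (fun e : Fin n → Bool => e ≠ b) with hS
  have hcard : (S.card : ℝ) ≤ 2 ^ n := by
    have : S.card ≤ Fintype.card (Fin n → Bool) := Finset.card_le_card (Finset.subset_univ S)
    have h2 : Fintype.card (Fin n → Bool) = 2 ^ n := by simp
    exact_mod_cast h2 ▸ this
  -- pointwise bound for each r
  have key : ∀ r : R, ‖∑ e : Fin n → Bool, ψ (e, r)‖ ^ 2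
      ≤ 2 * ‖ψ (b, r)‖ ^ 2 + 2 * 2 ^ n * ∑ e ∈ S, ‖ψ (e, r)‖ ^ 2 := by
    intro r
    have hsplit : ∑ e : Fin n → Bool, ψ (e, r) = ψ (b, r) + ∑ e ∈ S, ψ (e, r) := by
      rw [hS, Finset.filter_ne',
        ← Finset.add_sum_erase Finset.univ (fun e => ψ (e, r)) (Finset.mem_univ b)]
    have h1 : ‖∑ e : Fin n → Bool, ψ (e, r)‖ ≤ ‖ψ (b, r)‖ + ‖∑ e ∈ S, ψ (e, r)‖ := by
      rw [hsplit]; exact norm_add_le _ _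
    have h2 : ‖∑ e ∈ S, ψ (e, r)‖ ≤ ∑ e ∈ S, ‖ψ (e, r)‖ := norm_sum_le _ _
    have h3 : (∑ e ∈ S, ‖ψ (e, r)‖) ^ 2 ≤ (S.card : ℝ) * ∑ e ∈ S, ‖ψ (e, r)‖ ^ 2 :=
      sq_sum_le_card_mul_sum_sq
    have h4 : ‖∑ e ∈ S, ψ (e, r)‖ ^ 2 ≤ (2 : ℝ) ^ n * ∑ e ∈ S, ‖ψ (e, r)‖ ^ 2 := by
      have hsum_nonneg : (0:ℝ) ≤ ∑ e ∈ S, ‖ψ (e, r)‖ ^ 2 :=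
        Finset.sum_nonneg fun _ _ => sq_nonneg _
      calc ‖∑ e ∈ S, ψ (e, r)‖ ^ 2 ≤ (∑ e ∈ S, ‖ψ (e, r)‖) ^ 2 := by
            apply pow_le_pow_left₀ (norm_nonneg _) h2
        _ ≤ (S.card : ℝ) * ∑ e ∈ S, ‖ψ (e, r)‖ ^ 2 := h3
        _ ≤ (2:ℝ) ^ n * ∑ e ∈ S, ‖ψ (e, r)‖ ^ 2 := by
            exact mul_le_mul_of_nonneg_right hcard hsum_nonneg
    nlinarith [norm_nonneg (∑ e : Fin n → Bool, ψ (e, r)), norm_nonneg (ψ (b, r)),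
      norm_nonneg (∑ e ∈ S, ψ (e, r)), sq_nonneg (‖ψ (b, r)‖ - ‖∑ e ∈ S, ψ (e, r)‖)]
  have hb : ∑ r : R, ‖ψ (b, r)‖ ^ 2 ≤ 1 := by
    rw [← hψ, Fintype.sum_prod_type]
    exact Finset.single_le_sum (f := fun e => ∑ r : R, ‖ψ (e, r)‖ ^ 2)
      (fun _ _ => Finset.sum_nonneg fun _ _ => sq_nonneg _) (Finset.mem_univ b)
  have hsumkey : ∑ r : R, ‖∑ e : Fin n → Bool, ψ (e, r)‖ ^ 2
      ≤ ∑ r : R, (2 * ‖ψ (b, r)‖ ^ 2 + 2 * 2 ^ n * ∑ e ∈ S, ‖ψ (e, r)‖ ^ 2) :=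
    Finset.sum_le_sum fun r _ => key r
  rw [Finset.sum_add_distrib, ← Finset.mul_sum, ← Finset.mul_sum] at hsumkey
  have hpow : (0:ℝ) < 2 ^ n := by positivity
  rw [div_mul_eq_mul_div, div_le_iff₀ hpow, one_mul] at *
  have : (2 * ∑ r : R, ∑ e ∈ S, ‖ψ (e, r)‖ ^ 2 + 2 / 2 ^ n) * 2 ^ n
      = 2 * 2 ^ n * ∑ r : R, ∑ e ∈ S, ‖ψ (e, r)‖ ^ 2 + 2 := by
    field_simp
  rw [this]
  nlinarith [hsumkey, hb]
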